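/- Tightness construction, LP value: Let n = kt with integers k,t ≥ 1, X = [n], Y = the set of t-element subsets of X, and W(y|x) = 1/C(n−1,t−1) if x ∈ y and 0 otherwise. Then S^NS(W,k) = 1; in particular the feasible solution p_x = k/n for all x and r_{x,y} = k/n if x ∈ y (else 0) achieves LP objective value 1. -/

import Mathlib

open Finset

/-- Non-signaling (LP relaxation) value `S^NS(W,k)`. -/
noncomputable def SchanNS {X Y : Type*} [Fintype X] [Fintype Y] (W : X → Y → ℝ) (k : ℕ) : ℝ :=
  sSup { v : ℝ | ∃ r : X → Y → ℝ, ∃ p : X → ℝ,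
    (∀ x y, 0 ≤ r x y) ∧ (∀ x y, r x y ≤ p x) ∧ (∀ x, p x ≤ 1) ∧
    (∀ y, ∑ x, r x y ≤ 1) ∧ (∑ x, p x = k) ∧
    v = (1 / k) * ∑ x, ∑ y, W x y * r x y }

/-- tightness construction, LP value. With `n = kt`, `X = [n]`, `Y` the
`t`-subsets of `X` and `W(y|x) = 1/C(n−1,t−1)·1[x∈y]`, we have `S^NS(W,k) = 1`; moreover
`p_x = k/n`, `r_{x,y} = (k/n)·1[x∈y]` is feasible with LP objective value `1`. -/
theorem tightness_lp_value (k t n : ℕ) (hk : 1 ≤ k) (ht : 1 ≤ t) (hn : n = k * t)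
    (W : Fin n → {s : Finset (Fin n) // s.card = t} → ℝ)
    (hW : ∀ x y, W x y = if x ∈ y.1 then (1 : ℝ) / ((n - 1).choose (t - 1)) else 0)
    (p : Fin n → ℝ) (hp : ∀ x, p x = (k : ℝ) / n)
    (r : Fin n → {s : Finset (Fin n) // s.card = t} → ℝ)
    (hr : ∀ x y, r x y = if x ∈ y.1 then (k : ℝ) / n else 0) :
    SchanNS W k = 1 ∧
      (∀ x y, 0 ≤ r x y) ∧ (∀ x y, r x y ≤ p x) ∧ (∀ x, p x ≤ 1) ∧
      (∀ y, ∑ x, r x y ≤ 1) ∧ (∑ x, p x = k) ∧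
      (1 / (k : ℝ)) * ∑ x, ∑ y, W x y * r x y = 1 := by
  have hn1 : 1 ≤ n := by
    rw [hn]; exact Nat.one_le_iff_ne_zero.2 (Nat.mul_ne_zero (by omega) (by omega))
  have hnR : (0 : ℝ) < n := by exact_mod_cast hn1
  have hkR : (0 : ℝ) < k := by exact_mod_cast hk
  have htR : (0 : ℝ) < t := by exact_mod_cast ht
  have htn : t ≤ n := by
    rw [hn]; exact Nat.le_mul_of_pos_left t hk
  have hCpos : 0 < (n - 1).choose (t - 1) :=
    Nat.choose_pos (by omega)
  have hCR : (0 : ℝ) < ((n - 1).choose (t - 1) : ℝ) := by exact_mod_cast hCpos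
  -- key combinatorial identity : n * C(n-1,t-1) = C(n,t) * t
  have keyN : n * (n - 1).choose (t - 1) = n.choose t * t := by
    have := Nat.add_one_mul_choose_eq (n - 1) (t - 1)
    have h1 : n - 1 + 1 = n := by omega
    have h2 : t - 1 + 1 = t := by omega
    rwa [h1, h2] at this
  have key : (n : ℝ) * ((n - 1).choose (t - 1) : ℝ) = (n.choose t : ℝ) * t := by
    exact_mod_cast keyN
  have hnc : (n : ℝ) = (k : ℝ) * t := by rw [hn]; push_cast; ring
  have hck : (n.choose t : ℝ) = (k : ℝ) * ((n - 1).choose (t - 1) : ℝ) := by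
    have h : (n.choose t : ℝ) * t = (k : ℝ) * ((n - 1).choose (t - 1) : ℝ) * t := by
      linear_combination -key + ((n - 1).choose (t - 1) : ℝ) * hnc
    exact mul_right_cancel₀ htR.ne' h
  -- cardinality of Y
  have cardY : Fintype.card {s : Finset (Fin n) // s.card = t} = n.choose t := by
    rw [Fintype.card_finset_len, Fintype.card_fin]
  -- feasibility facts
  have hr0 : ∀ x y, 0 ≤ r x y := by
    intro x y; rw [hr]; split
    · positivity
    · exact le_rfl
  have hrp : ∀ x y, r x y ≤ p x := by
    intro x y; rw [hr, hp]; split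
    · exact le_rfl
    · positivity
  have hp1 : ∀ x, p x ≤ 1 := by
    intro x; rw [hp]
    rw [div_le_one hnR]
    exact_mod_cast by rw [hn]; exact Nat.le_mul_of_pos_right k (by omega)
  have hsumr : ∀ y : {s : Finset (Fin n) // s.card = t}, ∑ x, r x y ≤ 1 := by
    intro y
    have : ∑ x, r x y = (t : ℝ) * ((k : ℝ) / n) := by
      simp only [hr]
      rw [Finset.sum_ite_mem, Finset.univ_inter, Finset.sum_const, y.2, nsmul_eq_mul]
    rw [this, hn]
    have : (t : ℝ) * ((k : ℝ) / ((k : ℝ) * t)) = 1 := by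
      field_simp
    rw [Nat.cast_mul]; rw [this]
  have hsump : ∑ x, p x = (k : ℝ) := by
    simp only [hp, Finset.sum_const, Finset.card_univ, Fintype.card_fin, nsmul_eq_mul]
    field_simp
  -- objective value
  have hobj : ∑ x, ∑ y, W x y * r x y = (k : ℝ) := by
    have hterm : ∀ x y, W x y * r x y =
        if x ∈ y.1 then (1 : ℝ) / ((n - 1).choose (t - 1)) * ((k : ℝ) / n) else 0 := by
      intro x y; rw [hW, hr]; split <;> simp
    simp only [hterm]
    rw [Finset.sum_comm]
    have hy : ∀ y : {s : Finset (Fin n) // s.card = t},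
        ∑ x, (if x ∈ y.1 then (1 : ℝ) / ((n - 1).choose (t - 1)) * ((k : ℝ) / n) else 0)
          = (t : ℝ) * ((1 : ℝ) / ((n - 1).choose (t - 1)) * ((k : ℝ) / n)) := by
      intro y
      rw [Finset.sum_ite_mem, Finset.univ_inter, Finset.sum_const, y.2, nsmul_eq_mul]
    simp only [hy]
    rw [Finset.sum_const, Finset.card_univ, cardY, nsmul_eq_mul, hck, hnc]
    field_simp
  have hval : (1 / (k : ℝ)) * ∑ x, ∑ y, W x y * r x y = 1 := by
    rw [hobj]; field_simp
  refine ⟨?_, hr0, hrp, hp1, hsumr, hsump, hval⟩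
  -- sSup = 1
  apply IsGreatest.csSup_eq
  constructor
  · exact ⟨r, p, hr0, hrp, hp1, hsumr, hsump, hval.symm⟩
  · rintro v ⟨r', p', hr0', hrp', hp1', hsumr', hsump', hv⟩
    rw [hv]
    -- bound the objective
    have hbound : ∑ x, ∑ y, W x y * r' x y ≤ (k : ℝ) := by
      rw [Finset.sum_comm]
      have hy : ∀ y : {s : Finset (Fin n) // s.card = t},
          ∑ x, W x y * r' x y ≤ (1 : ℝ) / ((n - 1).choose (t - 1)) := by
        intro y
        have h1 : ∑ x, W x y * r' x y ≤
            ∑ x, (1 : ℝ) / ((n - 1).choose (t - 1)) * r' x y := by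
          apply Finset.sum_le_sum
          intro x _
          rw [hW]; split
          · exact le_rfl
          · simp only [zero_mul]
            exact mul_nonneg (by positivity) (hr0' x _)
        have h2 : ∑ x, (1 : ℝ) / ((n - 1).choose (t - 1)) * r' x y
            = (1 : ℝ) / ((n - 1).choose (t - 1)) * ∑ x, r' x y := by
          rw [Finset.mul_sum]
        calc ∑ x, W x y * r' x y ≤ _ := h1
          _ = _ := h2
          _ ≤ (1 : ℝ) / ((n - 1).choose (t - 1)) * 1 := by
              apply mul_le_mul_of_nonneg_left (hsumr' y); positivity
          _ = _ := mul_one _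
      calc ∑ y, ∑ x, W x y * r' x y
          ≤ ∑ y : {s : Finset (Fin n) // s.card = t},
              (1 : ℝ) / ((n - 1).choose (t - 1)) :=
            Finset.sum_le_sum fun y _ => hy y
        _ = (n.choose t : ℝ) * ((1 : ℝ) / ((n - 1).choose (t - 1))) := by
            rw [Finset.sum_const, Finset.card_univ, cardY, nsmul_eq_mul]
        _ = (k : ℝ) := by
            rw [hck]; field_simp
    calc (1 / (k : ℝ)) * ∑ x, ∑ y, W x y * r' x y
        ≤ (1 / (k : ℝ)) * (k : ℝ) := by
          apply mul_le_mul_of_nonneg_left hbound; positivity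
      _ = 1 := by field_simp
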